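/- Let Γ be a group acting on a set X with a finite generating set S = {γ_1, …, γ_n} (so Subgroup.closure S = ⊤). Suppose there exist elements σ, τ ∈ Γ, subsets U_σ, U_τ ⊆ X, and a point x ∈ X such that (1) x ∉ (U_σ ∪ U_τ) ∪ ⋃_{ε=±1} ⋃_{i=1}^n γ_i^ε • (U_σ ∪ U_τ); (2) σ^k • ({x} ∪ U_τ ∪ ⋃_{ε=±1} ⋃_{i=1}^n γ_i^ε • U_τ) ⊆ U_σ for every integer k ≠ 0; (3) τ^k • ({x} ∪ U_σ ∪ ⋃_{ε=±1} ⋃_{i=1}^n γ_i^ε • U_σ) ⊆ U_τ for every integer k ≠ 0. Then Γ is not cyclic and Γ has infinite girth. -/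

import Mathlib

open Pointwise

/-- A finitely generated group `Γ` has infinite girth if for every `n` there is a
finite generating set `S` of `Γ` such that the Cayley graph of `(Γ, S)` has no
nontrivial relation of length at most `n`: every element `w` of the free group on `S`
of reduced word length at most `n` which evaluates to the identity in `Γ` is trivial. -/
def HasInfiniteGirth (Γ : Type*) [Group Γ] : Prop :=
  ∀ n : ℕ, ∃ S : Finset Γ, Subgroup.closure (S : Set Γ) = ⊤ ∧
    ∀ w : FreeGroup S,
      (@FreeGroup.norm S (Classical.decEq S) w) ≤ n →
      FreeGroup.lift (fun s : S => (s : Γ)) w = 1 → w = 1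

namespace NakamuraAux

inductive Atom (n : ℕ)
  | s (k : ℤ)
  | t (k : ℤ)
  | g (i : Fin n) (b : Bool)

inductive St (n : ℕ)
  | x0
  | sS
  | sT
  | gS (i : Fin n) (b : Bool)
  | gT (i : Fin n) (b : Bool)

def sg (b : Bool) : ℤ := if b then 1 else -1

lemma sg_ne_zero (b : Bool) : sg b ≠ 0 := by cases b <;> simp [sg]

section

variable {Γ X : Type*} [Group Γ] [MulAction Γ X] {n : ℕ}

variable (γ : Fin n → Γ) (σ τ : Γ)

def evalA : Atom n → Γ
  | .s k => σ ^ k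
  | .t k => τ ^ k
  | .g i b => (γ i) ^ (sg b)

def evalL (l : List (Atom n)) : Γ := (l.map (evalA γ σ τ)).prod

@[simp] lemma evalL_nil : evalL γ σ τ ([] : List (Atom n)) = 1 := rfl

@[simp] lemma evalL_cons (a : Atom n) (l : List (Atom n)) :
    evalL γ σ τ (a :: l) = evalA γ σ τ a * evalL γ σ τ l := by
  simp [evalL]

variable (Uσ Uτ : Set X) (x : X)

def region : St n → Set X
  | .x0 => {x}
  | .sS => Uσ
  | .sT => Uτ
  | .gS i b => (γ i ^ sg b) • Uσ
  | .gT i b => (γ i ^ sg b) • Uτ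

inductive Ok : Atom n → St n → St n → Prop
  | s_x0 {k} : k ≠ 0 → Ok (.s k) .x0 .sS
  | s_sT {k} : k ≠ 0 → Ok (.s k) .sT .sS
  | s_gT {k i b} : k ≠ 0 → Ok (.s k) (.gT i b) .sS
  | t_x0 {k} : k ≠ 0 → Ok (.t k) .x0 .sT
  | t_sS {k} : k ≠ 0 → Ok (.t k) .sS .sT
  | t_gS {k i b} : k ≠ 0 → Ok (.t k) (.gS i b) .sT
  | g_sS {i b} : Ok (.g i b) .sS (.gS i b)
  | g_sT {i b} : Ok (.g i b) .sT (.gT i b)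

inductive Tracks : List (Atom n) → St n → Prop
  | nil : Tracks [] .x0
  | cons {l st a st'} : Tracks l st → Ok a st st' → Tracks (a :: l) st'

variable {γ σ τ Uσ Uτ x}
variable
  (h2 : ∀ k : ℤ, k ≠ 0 →
      σ ^ k • ({x} ∪ Uτ ∪ ⋃ i : Fin n, (γ i • Uτ ∪ (γ i)⁻¹ • Uτ) : Set X) ⊆ Uσ)
  (h3 : ∀ k : ℤ, k ≠ 0 →
      τ ^ k • ({x} ∪ Uσ ∪ ⋃ i : Fin n, (γ i • Uσ ∪ (γ i)⁻¹ • Uσ) : Set X) ⊆ Uτ)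

include h2 h3

lemma step {a : Atom n} {st st'} (hok : Ok a st st') {y : X}
    (hy : y ∈ region γ Uσ Uτ x st) : evalA γ σ τ a • y ∈ region γ Uσ Uτ x st' := by
  have hsub : ∀ i : Fin n, ∀ b, ∀ (U : Set X), (γ i ^ sg b) • U ⊆ γ i • U ∪ (γ i)⁻¹ • U := by
    intro i b U
    cases b <;> simp [sg]
  cases hok with
  | s_x0 hk =>
    refine h2 _ hk ?_
    refine Set.smul_mem_smul_set ?_
    simp only [region, Set.mem_singleton_iff] at hy
    subst hy
    exact Or.inl (Or.inl rfl)
  | s_sT hk =>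
    refine h2 _ hk (Set.smul_mem_smul_set (Or.inl (Or.inr hy)))
  | s_gT hk =>
    refine h2 _ hk (Set.smul_mem_smul_set (Or.inr ?_))
    exact Set.mem_iUnion.2 ⟨_, hsub _ _ _ hy⟩
  | t_x0 hk =>
    refine h3 _ hk (Set.smul_mem_smul_set ?_)
    simp only [region, Set.mem_singleton_iff] at hy
    subst hy
    exact Or.inl (Or.inl rfl)
  | t_sS hk =>
    exact h3 _ hk (Set.smul_mem_smul_set (Or.inl (Or.inr hy)))
  | t_gS hk =>
    refine h3 _ hk (Set.smul_mem_smul_set (Or.inr ?_))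
    exact Set.mem_iUnion.2 ⟨_, hsub _ _ _ hy⟩
  | g_sS => exact Set.smul_mem_smul_set hy
  | g_sT => exact Set.smul_mem_smul_set hy

lemma tracks_mem {l : List (Atom n)} {st} (h : Tracks l st) :
    evalL γ σ τ l • x ∈ region γ Uσ Uτ x st := by
  induction h with
  | nil => simp [region]
  | cons htr hok ih =>
    rw [evalL_cons, mul_smul]
    exact step h2 h3 hok ih

lemma ne_one_of_tracks (h1x : x ∉ Uσ ∧ x ∉ Uτ) {l : List (Atom n)} {st}
    (h : Tracks l st) (hst : st = .sS ∨ st = .sT) : evalL γ σ τ l ≠ 1 := by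
  intro hcon
  have := tracks_mem h2 h3 h
  rw [hcon, one_smul] at this
  rcases hst with rfl | rfl
  · exact h1x.1 this
  · exact h1x.2 this

omit h2 h3

abbrev K (n : ℕ) := Fin n ⊕ Bool

variable (γ σ τ) (m : Fin n → ℤ)

def Fv : K n → Γ
  | .inl i => σ ^ (m i) * γ i * τ ^ (m i)
  | .inr false => σ
  | .inr true => τ

def Ew (u : List (K n × Bool)) : Γ :=
  (u.map fun p => cond p.2 (Fv γ σ τ m p.1) (Fv γ σ τ m p.1)⁻¹).prod

@[simp] lemma Ew_nil : Ew γ σ τ m ([] : List (K n × Bool)) = 1 := rfl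

@[simp] lemma Ew_cons (p : K n × Bool) (u : List (K n × Bool)) :
    Ew γ σ τ m (p :: u) = (cond p.2 (Fv γ σ τ m p.1) (Fv γ σ τ m p.1)⁻¹) * Ew γ σ τ m u := by
  simp [Ew]

def go : Bool → ℤ → List (K n × Bool) → List (Atom n)
  | false, k, [] => [.s k]
  | true, k, [] => [.t k]
  | false, k, (.inr false, b) :: u => go false (k + sg b) u
  | false, k, (.inr true, b) :: u => .s k :: go true (sg b) u
  | false, k, (.inl i, true) :: u => .s (k + m i) :: .g i true :: go true (m i) u
  | false, k, (.inl i, false) :: u => .s k :: .t (-(m i)) :: .g i false :: go false (-(m i)) u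
  | true, k, (.inr true, b) :: u => go true (k + sg b) u
  | true, k, (.inr false, b) :: u => .t k :: go false (sg b) u
  | true, k, (.inl i, true) :: u => .t k :: .s (m i) :: .g i true :: go true (m i) u
  | true, k, (.inl i, false) :: u => .t (k + -(m i)) :: .g i false :: go false (-(m i)) u

def build : List (K n × Bool) → List (Atom n)
  | [] => []
  | (.inr false, b) :: u => go m false (sg b) u
  | (.inr true, b) :: u => go m true (sg b) u
  | (.inl i, true) :: u => .s (m i) :: .g i true :: go m true (m i) u
  | (.inl i, false) :: u => .t (-(m i)) :: .g i false :: go m false (-(m i)) u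

lemma evalL_go : ∀ (u : List (K n × Bool)) (bs : Bool) (k : ℤ),
    evalL γ σ τ (go m bs k u) = (if bs then τ ^ k else σ ^ k) * Ew γ σ τ m u
  | [], false, k => by simp [go, evalL, evalA]
  | [], true, k => by simp [go, evalL, evalA]
  | (.inr false, b) :: u, false, k => by
    rw [go, evalL_go u, Ew_cons]
    cases b <;> simp [Fv, sg, zpow_add, mul_assoc]
  | (.inr true, b) :: u, false, k => by
    rw [go, evalL_cons, evalL_go u, Ew_cons]
    cases b <;> simp [Fv, sg, evalA, mul_assoc]
  | (.inl i, true) :: u, false, k => by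
    rw [go, evalL_cons, evalL_cons, evalL_go u, Ew_cons]
    simp [Fv, sg, evalA, zpow_add, mul_assoc]
  | (.inl i, false) :: u, false, k => by
    rw [go, evalL_cons, evalL_cons, evalL_cons, evalL_go u, Ew_cons]
    simp [Fv, sg, evalA, mul_assoc]
  | (.inr true, b) :: u, true, k => by
    rw [go, evalL_go u, Ew_cons]
    cases b <;> simp [Fv, sg, zpow_add, mul_assoc]
  | (.inr false, b) :: u, true, k => by
    rw [go, evalL_cons, evalL_go u, Ew_cons]
    cases b <;> simp [Fv, sg, evalA, mul_assoc]
  | (.inl i, true) :: u, true, k => by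
    rw [go, evalL_cons, evalL_cons, evalL_cons, evalL_go u, Ew_cons]
    simp [Fv, sg, evalA, mul_assoc]
  | (.inl i, false) :: u, true, k => by
    rw [go, evalL_cons, evalL_cons, evalL_go u, Ew_cons]
    simp [Fv, sg, evalA, zpow_add, mul_assoc]

lemma evalL_build (u : List (K n × Bool)) :
    evalL γ σ τ (build m u) = Ew γ σ τ m u := by
  match u with
  | [] => simp [build, evalL]
  | (.inr false, b) :: u => rw [build, evalL_go, Ew_cons]; cases b <;> simp [Fv, sg]
  | (.inr true, b) :: u => rw [build, evalL_go, Ew_cons]; cases b <;> simp [Fv, sg]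
  | (.inl i, true) :: u =>
    rw [build, evalL_cons, evalL_cons, evalL_go, Ew_cons]
    simp [Fv, sg, evalA, mul_assoc]
  | (.inl i, false) :: u =>
    rw [build, evalL_cons, evalL_cons, evalL_go, Ew_cons]
    simp [Fv, sg, evalA, mul_assoc]

def Red (u : List (K n × Bool)) : Prop :=
  List.Chain' (fun a b => ¬(b.1 = a.1 ∧ b.2 = !a.2)) u

def CarryS (p : K n × Bool) (k : ℤ) (B : ℕ) : Prop :=
  (∃ (b : Bool) (d : ℕ), p = (.inr false, b) ∧ 1 ≤ d ∧ d ≤ B ∧ k = sg b * d) ∨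
  (∃ (b : Bool) (d : ℕ) (j : Fin n), p = (.inr false, b) ∧ 1 ≤ d ∧ d ≤ B ∧
    k = -(m j) + sg b * d) ∨
  (∃ j : Fin n, p = (.inl j, false) ∧ k = -(m j))

def CarryT (p : K n × Bool) (k : ℤ) (B : ℕ) : Prop :=
  (∃ (b : Bool) (d : ℕ), p = (.inr true, b) ∧ 1 ≤ d ∧ d ≤ B ∧ k = sg b * d) ∨
  (∃ (b : Bool) (d : ℕ) (j : Fin n), p = (.inr true, b) ∧ 1 ≤ d ∧ d ≤ B ∧
    k = m j + sg b * d) ∨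
  (∃ j : Fin n, p = (.inl j, true) ∧ k = m j)

variable {m} {N : ℕ}

section CarryFacts

variable (hm1 : ∀ i, (N : ℤ) < m i)
    (hmd : ∀ i j : Fin n, i ≠ j → m i + (N : ℤ) < m j ∨ m j + (N : ℤ) < m i)
    {p : K n × Bool} {k : ℤ} {B : ℕ} (hB : B ≤ N)

include hm1 hB

lemma CarryS.ne_zero (h : CarryS m p k B) : k ≠ 0 := by
  rcases h with ⟨b, d, _, hd1, hd2, rfl⟩ | ⟨b, d, j, _, hd1, hd2, rfl⟩ | ⟨j, _, rfl⟩
  · cases b <;> simp [sg] <;> omega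
  · have := hm1 j; cases b <;> simp [sg] <;> omega
  · have := hm1 j; omega

lemma CarryT.ne_zero (h : CarryT m p k B) : k ≠ 0 := by
  rcases h with ⟨b, d, _, hd1, hd2, rfl⟩ | ⟨b, d, j, _, hd1, hd2, rfl⟩ | ⟨j, _, rfl⟩
  · cases b <;> simp [sg] <;> omega
  · have := hm1 j; cases b <;> simp [sg] <;> omega
  · have := hm1 j; omega

include hmd

lemma CarryS.add_ne_zero (h : CarryS m p k B) (i : Fin n)
    (hp : p ≠ (.inl i, false)) : k + m i ≠ 0 := by
  have hmi := hm1 i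
  rcases h with ⟨b, d, _, hd1, hd2, rfl⟩ | ⟨b, d, j, _, hd1, hd2, rfl⟩ | ⟨j, hpj, rfl⟩
  · cases b <;> simp [sg] <;> omega
  · rcases eq_or_ne i j with rfl | hij
    · cases b <;> simp [sg] <;> omega
    · rcases hmd i j hij with h' | h' <;> cases b <;> simp [sg] <;> omega
  · have hij : i ≠ j := by rintro rfl; exact hp hpj
    rcases hmd i j hij with h' | h' <;> omega

lemma CarryT.sub_ne_zero (h : CarryT m p k B) (i : Fin n)
    (hp : p ≠ (.inl i, true)) : k + -(m i) ≠ 0 := by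
  have hmi := hm1 i
  rcases h with ⟨b, d, _, hd1, hd2, rfl⟩ | ⟨b, d, j, _, hd1, hd2, rfl⟩ | ⟨j, hpj, rfl⟩
  · cases b <;> simp [sg] <;> omega
  · rcases eq_or_ne i j with rfl | hij
    · cases b <;> simp [sg] <;> omega
    · rcases hmd i j hij with h' | h' <;> cases b <;> simp [sg] <;> omega
  · have hij : i ≠ j := by rintro rfl; exact hp hpj
    rcases hmd i j hij with h' | h' <;> omega

end CarryFacts

set_option maxHeartbeats 2000000 in
lemma go_tracks (hm1 : ∀ i, (N : ℤ) < m i)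
    (hmd : ∀ i j : Fin n, i ≠ j → m i + (N : ℤ) < m j ∨ m j + (N : ℤ) < m i) :
    ∀ u : List (K n × Bool), u.length ≤ N →
      (∀ p k, Red (p :: u) → CarryS m p k (N - u.length) →
        Tracks (go m false k u) St.sS)
      ∧ (∀ p k, Red (p :: u) → CarryT m p k (N - u.length) →
        Tracks (go m true k u) St.sT) := by
  intro u
  induction u with
  | nil =>
    intro _
    constructor
    · intro p k _ hc
      exact Tracks.cons Tracks.nil (Ok.s_x0 (hc.ne_zero hm1 (by omega)))
    · intro p k _ hc
      exact Tracks.cons Tracks.nil (Ok.t_x0 (hc.ne_zero hm1 (by omega)))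
  | cons q u' ih =>
    intro hlen
    have hlen' : u'.length ≤ N := by simp at hlen; omega
    have hB : N - (q :: u').length ≤ N := by omega
    have hB1 : 1 ≤ N - u'.length := by simp at hlen ⊢; omega
    have ihs := (ih hlen').1
    have iht := (ih hlen').2
    obtain ⟨i | bb, bq⟩ := q
    · -- q = (.inl i, bq)
      cases bq
      · -- q = a_i⁻¹
        constructor
        · intro p k hred hc
          have hpq := (List.isChain_cons_cons.mp hred).1
          have hred' : Red ((Sum.inl i, false) :: u') := (List.isChain_cons_cons.mp hred).2
          have hk : k ≠ 0 := hc.ne_zero hm1 hB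
          have hmi : -(m i) ≠ 0 := by have := hm1 i; omega
          have htr := ihs _ (-(m i)) hred' (Or.inr (Or.inr ⟨i, rfl, rfl⟩))
          simp only [go]
          exact Tracks.cons (Tracks.cons (Tracks.cons htr Ok.g_sS) (Ok.t_gS hmi))
            (Ok.s_sT hk)
        · intro p k hred hc
          have hpq := (List.isChain_cons_cons.mp hred).1
          have hred' : Red ((Sum.inl i, false) :: u') := (List.isChain_cons_cons.mp hred).2
          have hp : p ≠ (Sum.inl i, true) := by
            rintro rfl; exact hpq ⟨rfl, rfl⟩
          have hk : k + -(m i) ≠ 0 := hc.sub_ne_zero hm1 hmd hB i hp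
          have htr := ihs _ (-(m i)) hred' (Or.inr (Or.inr ⟨i, rfl, rfl⟩))
          simp only [go]
          exact Tracks.cons (Tracks.cons htr Ok.g_sS) (Ok.t_gS hk)
      · -- q = a_i
        constructor
        · intro p k hred hc
          have hpq := (List.isChain_cons_cons.mp hred).1
          have hred' : Red ((Sum.inl i, true) :: u') := (List.isChain_cons_cons.mp hred).2
          have hp : p ≠ (Sum.inl i, false) := by
            rintro rfl; exact hpq ⟨rfl, rfl⟩
          have hk : k + m i ≠ 0 := hc.add_ne_zero hm1 hmd hB i hp
          have htr := iht _ (m i) hred' (Or.inr (Or.inr ⟨i, rfl, rfl⟩))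
          simp only [go]
          exact Tracks.cons (Tracks.cons htr Ok.g_sT) (Ok.s_gT hk)
        · intro p k hred hc
          have hpq := (List.isChain_cons_cons.mp hred).1
          have hred' : Red ((Sum.inl i, true) :: u') := (List.isChain_cons_cons.mp hred).2
          have hk : k ≠ 0 := hc.ne_zero hm1 hB
          have hmi : m i ≠ 0 := by have := hm1 i; omega
          have htr := iht _ (m i) hred' (Or.inr (Or.inr ⟨i, rfl, rfl⟩))
          simp only [go]
          exact Tracks.cons (Tracks.cons (Tracks.cons htr Ok.g_sT) (Ok.s_gT hmi))
            (Ok.t_sS hk)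
    · -- q = (.inr bb, bq)  : σ-letter (bb = false) or τ-letter (bb = true)
      cases bb
      · -- σ-letter
        constructor
        · intro p k hred hc
          have hpq := (List.isChain_cons_cons.mp hred).1
          have hred' : Red ((Sum.inr false, bq) :: u') := (List.isChain_cons_cons.mp hred).2
          rw [go]
          refine ihs _ (k + sg bq) hred' ?_
          rcases hc with ⟨b₂, d, hp, hd1, hd2, rfl⟩ | ⟨b₂, d, j, hp, hd1, hd2, rfl⟩ |
              ⟨j, hp, rfl⟩
          · have hb : bq = b₂ := by
              subst hp
              by_contra hbb
              exact hpq ⟨rfl, by cases bq <;> cases b₂ <;> simp_all⟩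
            subst hb
            refine Or.inl ⟨bq, d + 1, rfl, by omega, by simp only [List.length_cons] at hd2; omega, ?_⟩
            cases bq <;> simp [sg] <;> push_cast <;> ring
          · have hb : bq = b₂ := by
              subst hp
              by_contra hbb
              exact hpq ⟨rfl, by cases bq <;> cases b₂ <;> simp_all⟩
            subst hb
            refine Or.inr (Or.inl ⟨bq, d + 1, j, rfl, by omega, by simp only [List.length_cons] at hd2; omega, ?_⟩)
            cases bq <;> simp [sg] <;> push_cast <;> ring
          · refine Or.inr (Or.inl ⟨bq, 1, j, rfl, le_refl 1, hB1, ?_⟩)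
            subst hp
            cases bq <;> simp [sg]
        · intro p k hred hc
          have hred' : Red ((Sum.inr false, bq) :: u') := (List.isChain_cons_cons.mp hred).2
          have hk : k ≠ 0 := hc.ne_zero hm1 hB
          have htr := ihs _ (sg bq) hred'
            (Or.inl ⟨bq, 1, rfl, le_refl 1, hB1, by cases bq <;> simp [sg]⟩)
          simp only [go]
          exact Tracks.cons htr (Ok.t_sS hk)
      · -- τ-letter
        constructor
        · intro p k hred hc
          have hred' : Red ((Sum.inr true, bq) :: u') := (List.isChain_cons_cons.mp hred).2
          have hk : k ≠ 0 := hc.ne_zero hm1 hB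
          have htr := iht _ (sg bq) hred'
            (Or.inl ⟨bq, 1, rfl, le_refl 1, hB1, by cases bq <;> simp [sg]⟩)
          simp only [go]
          exact Tracks.cons htr (Ok.s_sT hk)
        · intro p k hred hc
          have hpq := (List.isChain_cons_cons.mp hred).1
          have hred' : Red ((Sum.inr true, bq) :: u') := (List.isChain_cons_cons.mp hred).2
          rw [go]
          refine iht _ (k + sg bq) hred' ?_
          rcases hc with ⟨b₂, d, hp, hd1, hd2, rfl⟩ | ⟨b₂, d, j, hp, hd1, hd2, rfl⟩ |
              ⟨j, hp, rfl⟩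
          · have hb : bq = b₂ := by
              subst hp
              by_contra hbb
              exact hpq ⟨rfl, by cases bq <;> cases b₂ <;> simp_all⟩
            subst hb
            refine Or.inl ⟨bq, d + 1, rfl, by omega, by simp only [List.length_cons] at hd2; omega, ?_⟩
            cases bq <;> simp [sg] <;> push_cast <;> ring
          · have hb : bq = b₂ := by
              subst hp
              by_contra hbb
              exact hpq ⟨rfl, by cases bq <;> cases b₂ <;> simp_all⟩
            subst hb
            refine Or.inr (Or.inl ⟨bq, d + 1, j, rfl, by omega, by simp only [List.length_cons] at hd2; omega, ?_⟩)
            cases bq <;> simp [sg] <;> push_cast <;> ring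
          · refine Or.inr (Or.inl ⟨bq, 1, j, rfl, le_refl 1, hB1, ?_⟩)
            subst hp
            cases bq <;> simp [sg]

lemma build_tracks (hm1 : ∀ i, (N : ℤ) < m i)
    (hmd : ∀ i j : Fin n, i ≠ j → m i + (N : ℤ) < m j ∨ m j + (N : ℤ) < m i)
    (u : List (K n × Bool)) (hne : u ≠ []) (hred : Red u) (hlen : u.length ≤ N) :
    ∃ st : St n, Tracks (build m u) st ∧ (st = St.sS ∨ st = St.sT) := by
  match u with
  | [] => exact absurd rfl hne
  | q :: u' =>
    have hlen' : u'.length ≤ N := by simp at hlen; omega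
    have hB1 : 1 ≤ N - u'.length := by simp at hlen; omega
    obtain ⟨i | bb, bq⟩ := q
    · cases bq
      · refine ⟨St.sT, ?_, Or.inr rfl⟩
        have hmi : -(m i) ≠ 0 := by have := hm1 i; omega
        have htr := (go_tracks hm1 hmd u' hlen').1 _ (-(m i)) hred
          (Or.inr (Or.inr ⟨i, rfl, rfl⟩))
        simp only [build]
        exact Tracks.cons (Tracks.cons htr Ok.g_sS) (Ok.t_gS hmi)
      · refine ⟨St.sS, ?_, Or.inl rfl⟩
        have hmi : m i ≠ 0 := by have := hm1 i; omega
        have htr := (go_tracks hm1 hmd u' hlen').2 _ (m i) hred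
          (Or.inr (Or.inr ⟨i, rfl, rfl⟩))
        simp only [build]
        exact Tracks.cons (Tracks.cons htr Ok.g_sT) (Ok.s_gT hmi)
    · cases bb
      · refine ⟨St.sS, ?_, Or.inl rfl⟩
        simp only [build]
        exact (go_tracks hm1 hmd u' hlen').1 _ (sg bq) hred
          (Or.inl ⟨bq, 1, rfl, le_refl 1, hB1, by cases bq <;> simp [sg]⟩)
      · refine ⟨St.sT, ?_, Or.inr rfl⟩
        simp only [build]
        exact (go_tracks hm1 hmd u' hlen').2 _ (sg bq) hred
          (Or.inl ⟨bq, 1, rfl, le_refl 1, hB1, by cases bq <;> simp [sg]⟩)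

end

end NakamuraAux

namespace NakamuraAux

lemma reduce_tail {α : Type*} [DecidableEq α] (a : α × Bool) (L : List (α × Bool))
    (h : FreeGroup.reduce (a :: L) = a :: L) : FreeGroup.reduce L = L := by
  rw [FreeGroup.reduce.cons] at h
  rcases hL : FreeGroup.reduce L with _ | ⟨hd, tl⟩
  · rw [hL] at h
    have h' : [a] = a :: L := h
    injection h' with _ h2
    try exact h2
  · rw [hL] at h
    dsimp only [] at h
    split_ifs at h with hc
    · exfalso
      have hle : (FreeGroup.reduce L).length ≤ L.length :=
        FreeGroup.Red.length_le FreeGroup.reduce.red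
      rw [hL, h] at hle
      simp only [List.length_cons] at hle
      omega
    · injection h with _ h2
      try exact h2

lemma chain'_of_reduce {α : Type*} [DecidableEq α] :
    ∀ L : List (α × Bool), FreeGroup.reduce L = L →
      L.Chain' (fun a b => ¬(b.1 = a.1 ∧ b.2 = !a.2))
  | [], _ => List.isChain_nil
  | [a], _ => List.isChain_singleton a
  | a :: b :: t, h => by
    refine List.isChain_cons_cons.mpr ⟨?_, chain'_of_reduce (b :: t) (reduce_tail a _ h)⟩
    rintro ⟨hh1, hh2⟩
    have hb : b = (a.1, !a.2) := Prod.ext hh1 hh2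
    refine FreeGroup.reduce.not (p := False) (L₁ := a :: b :: t) (L₂ := []) (L₃ := t) (x := a.1) (b := a.2) ?_
    rw [h, hb]
    rfl

lemma chain'_map_of_inj {α β : Type*} (f : α → β) (hf : Function.Injective f)
    {L : List (α × Bool)}
    (h : L.Chain' (fun a b => ¬(b.1 = a.1 ∧ b.2 = !a.2))) :
    (L.map (Prod.map f id)).Chain' (fun a b => ¬(b.1 = a.1 ∧ b.2 = !a.2)) := by
  unfold List.Chain' at h ⊢
  rw [List.isChain_map]
  refine h.imp ?_ 
  rintro a b hab ⟨hh1, hh2⟩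
  exact hab ⟨hf hh1, hh2⟩

end NakamuraAux

open NakamuraAux in
/-- **Nakamura's criterion for infinite girth.** -/
theorem infinite_girth_criterion {Γ X : Type*} [Group Γ] [MulAction Γ X]
    {n : ℕ} (γ : Fin n → Γ) (hgen : Subgroup.closure (Set.range γ) = ⊤)
    (σ τ : Γ) (Uσ Uτ : Set X) (x : X)
    (h1 : x ∉ (Uσ ∪ Uτ) ∪ ⋃ i : Fin n, (γ i • (Uσ ∪ Uτ) ∪ (γ i)⁻¹ • (Uσ ∪ Uτ)))
    (h2 : ∀ k : ℤ, k ≠ 0 →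
      σ ^ k • ({x} ∪ Uτ ∪ ⋃ i : Fin n, (γ i • Uτ ∪ (γ i)⁻¹ • Uτ) : Set X) ⊆ Uσ)
    (h3 : ∀ k : ℤ, k ≠ 0 →
      τ ^ k • ({x} ∪ Uσ ∪ ⋃ i : Fin n, (γ i • Uσ ∪ (γ i)⁻¹ • Uσ) : Set X) ⊆ Uτ) :
    ¬ IsCyclic Γ ∧ HasInfiniteGirth Γ := by
  classical
  have h1S : x ∉ Uσ := fun h => h1 (Set.mem_union_left _ (Set.mem_union_left _ h))
  have h1T : x ∉ Uτ := fun h => h1 (Set.mem_union_left _ (Set.mem_union_right _ h))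
  constructor
  · -- not cyclic
    intro hcyc
    obtain ⟨g, hg⟩ := hcyc.exists_generator
    obtain ⟨a, ha⟩ := Subgroup.mem_zpowers_iff.mp (hg σ)
    obtain ⟨b, hb⟩ := Subgroup.mem_zpowers_iff.mp (hg τ)
    have hcomm : σ * τ = τ * σ := by
      rw [← ha, ← hb, ← zpow_add, ← zpow_add, add_comm]
    have e1 : (τ ^ (-1 : ℤ)) • x ∈ Uτ :=
      h3 (-1) (by norm_num)
        (Set.smul_mem_smul_set (Set.mem_union_left _ (Set.mem_union_left _ rfl)))
    have e2 : (σ ^ (-1 : ℤ)) • (τ ^ (-1 : ℤ)) • x ∈ Uσ :=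
      h2 (-1) (by norm_num)
        (Set.smul_mem_smul_set (Set.mem_union_left _ (Set.mem_union_right _ e1)))
    have e3 : (τ ^ (1 : ℤ)) • (σ ^ (-1 : ℤ)) • (τ ^ (-1 : ℤ)) • x ∈ Uτ :=
      h3 1 one_ne_zero
        (Set.smul_mem_smul_set (Set.mem_union_left _ (Set.mem_union_right _ e2)))
    have e4 : (σ ^ (1 : ℤ)) • (τ ^ (1 : ℤ)) • (σ ^ (-1 : ℤ)) • (τ ^ (-1 : ℤ)) • x ∈ Uσ :=
      h2 1 one_ne_zero
        (Set.smul_mem_smul_set (Set.mem_union_left _ (Set.mem_union_right _ e3)))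
    have hc1 : σ ^ (1 : ℤ) * τ ^ (1 : ℤ) * σ ^ (-1 : ℤ) * τ ^ (-1 : ℤ) = 1 := by
      simp only [zpow_one, zpow_neg_one]
      rw [hcomm]
      group
    have hx : (σ ^ (1 : ℤ)) • (τ ^ (1 : ℤ)) • (σ ^ (-1 : ℤ)) • (τ ^ (-1 : ℤ)) • x = x := by
      rw [← mul_smul, ← mul_smul, ← mul_smul, hc1, one_smul]
    rw [hx] at e4
    exact h1S e4
  · -- infinite girth
    intro N
    set NN : ℕ := N + 2 with hNN
    set m : Fin n → ℤ := fun i => ((NN : ℤ) + 1) * ((i : ℤ) + 1) + 1 with hm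
    have hm1 : ∀ i, (NN : ℤ) < m i := by
      intro i
      have h0 : (0 : ℤ) ≤ (i : ℤ) := Int.natCast_nonneg _
      have h0' : (0 : ℤ) ≤ (NN : ℤ) := Int.natCast_nonneg _
      have hmul := mul_le_mul_of_nonneg_left (show (1 : ℤ) ≤ (i : ℤ) + 1 by omega)
        (show (0 : ℤ) ≤ (NN : ℤ) + 1 by omega)
      rw [mul_one] at hmul
      simp only [hm]
      linarith
    have hmono : ∀ i j : Fin n, (i : ℕ) < (j : ℕ) → m i + (NN : ℤ) < m j := by
      intro i j hij
      have h1' : (i : ℤ) + 1 + 1 ≤ (j : ℤ) + 1 := by omega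
      have h0' : (0 : ℤ) ≤ (NN : ℤ) := Int.natCast_nonneg _
      have hmul := mul_le_mul_of_nonneg_left h1' (show (0 : ℤ) ≤ (NN : ℤ) + 1 by omega)
      have hdist : ((NN : ℤ) + 1) * ((i : ℤ) + 1 + 1) =
          ((NN : ℤ) + 1) * ((i : ℤ) + 1) + ((NN : ℤ) + 1) := by ring
      simp only [hm]
      linarith
    have hmd : ∀ i j : Fin n, i ≠ j → m i + (NN : ℤ) < m j ∨ m j + (NN : ℤ) < m i := by
      intro i j hij
      rcases lt_or_gt_of_ne (fun h => hij (Fin.ext h) : (i : ℕ) ≠ (j : ℕ)) with h | h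
      · exact Or.inl (hmono i j h)
      · exact Or.inr (hmono j i h)
    have key : ∀ u : List (K n × Bool), u ≠ [] → Red u → u.length ≤ NN →
        Ew γ σ τ m u ≠ 1 := by
      intro u hne hred hlen
      obtain ⟨st, htr, hst⟩ := build_tracks hm1 hmd u hne hred hlen
      have := ne_one_of_tracks h2 h3 ⟨h1S, h1T⟩ htr hst
      rwa [evalL_build] at this
    have hinj : Function.Injective (Fv γ σ τ m) := by
      intro k1 k2 hk
      by_contra hne
      refine key [(k1, true), (k2, false)] (by simp) ?_ (by simp only [List.length_cons, List.length_nil, hNN]; omega) ?_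
      · refine List.isChain_cons_cons.mpr ⟨?_, List.isChain_singleton _⟩
        rintro ⟨hh, -⟩
        exact hne hh.symm
      · simp [Ew, hk]
    refine ⟨Finset.image (Fv γ σ τ m) Finset.univ, ?_, ?_⟩
    · -- generates
      rw [eq_top_iff, ← hgen]
      refine (Subgroup.closure_le _).mpr ?_
      rintro _ ⟨i, rfl⟩
      have hσ : σ ∈ Subgroup.closure (↑(Finset.image (Fv γ σ τ m) Finset.univ) : Set Γ) :=
        Subgroup.subset_closure (by
          simp only [Finset.coe_image, Finset.coe_univ, Set.image_univ]
          exact ⟨Sum.inr false, rfl⟩)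
      have hτ : τ ∈ Subgroup.closure (↑(Finset.image (Fv γ σ τ m) Finset.univ) : Set Γ) :=
        Subgroup.subset_closure (by
          simp only [Finset.coe_image, Finset.coe_univ, Set.image_univ]
          exact ⟨Sum.inr true, rfl⟩)
      have ha : σ ^ (m i) * γ i * τ ^ (m i) ∈
          Subgroup.closure (↑(Finset.image (Fv γ σ τ m) Finset.univ) : Set Γ) :=
        Subgroup.subset_closure (by
          simp only [Finset.coe_image, Finset.coe_univ, Set.image_univ]
          exact ⟨Sum.inl i, rfl⟩)
      have hdecomp : γ i = (σ ^ (m i))⁻¹ * (σ ^ (m i) * γ i * τ ^ (m i)) * (τ ^ (m i))⁻¹ := by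
        group
      rw [SetLike.mem_coe, hdecomp]
      exact mul_mem (mul_mem (inv_mem (Subgroup.zpow_mem _ hσ _)) ha)
        (inv_mem (Subgroup.zpow_mem _ hτ _))
    · -- no short relations
      intro w hnorm hlift
      by_contra hw
      letI deq : DecidableEq ↥(Finset.image (Fv γ σ τ m) Finset.univ) :=
        Classical.decEq _
      have hex : ∀ l : ↥(Finset.image (Fv γ σ τ m) Finset.univ),
          ∃ k : K n, Fv γ σ τ m k = (l : Γ) := by
        intro l
        obtain ⟨k, -, hk⟩ := Finset.mem_image.mp l.2
        exact ⟨k, hk⟩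
      set cls : ↥(Finset.image (Fv γ σ τ m) Finset.univ) → K n :=
        fun l => (hex l).choose with hclsdef
      have hcls : ∀ l, Fv γ σ τ m (cls l) = (l : Γ) := fun l => (hex l).choose_spec
      have hclsinj : Function.Injective cls := by
        intro l1 l2 h
        apply Subtype.ext
        rw [← hcls l1, ← hcls l2, h]
      set u : List (K n × Bool) := w.toWord.map (Prod.map cls id) with hu
      have hne : u ≠ [] := by
        simp only [hu, ne_eq, List.map_eq_nil_iff]
        exact fun h => hw (FreeGroup.toWord_eq_nil_iff.mp h)
      have hred : Red u := chain'_map_of_inj cls hclsinj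
        (chain'_of_reduce _ (FreeGroup.reduce_toWord w))
      have hlen : u.length ≤ NN := by
        simp only [hu, List.length_map]
        have : w.toWord.length ≤ N := hnorm
        omega
      have hEw : Ew γ σ τ m u = 1 := by
        rw [← hlift]
        conv_rhs => rw [← FreeGroup.mk_toWord (x := w)]
        rw [FreeGroup.lift_mk]
        simp only [Ew, hu, List.map_map]
        congr 1
        refine List.map_congr_left ?_
        intro p _
        simp only [Function.comp_apply, Prod.map_fst, Prod.map_snd, id_eq, hcls]
      exact key u hne hred hlen hEw
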